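/- Let C satisfy Assumption 2 and fix γ > 0. Define, for each problem instance (f_1,…,f_m, G) satisfying Assumption 1, the sets S_KKT = {X ∈ ℝ^{m×d} : ∃ Y ∈ ℝ^{m×d}, √C X = 0 and for each i the i-th row of −(∇f(X) + √C Y) is a subgradient of G at x_i} and S_Fix = {X ∈ ℝ^{m×d} : C X = 0 and ∃ V ∈ ℝ^{m×d} whose i-th row is a subgradient of G at x_i with 1ᵀ(I − A)X + γ 1ᵀ B ∇f(X) = −γ 1ᵀ V}. Then S_KKT = S_Fix holds for every problem instance satisfying Assumption 1 if and only if the matrices A, B ∈ ℝ^{m×m} satisfy Assumption 3: 1ᵀ A 1 = m and 1ᵀ B = 1ᵀ. -/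

import Mathlib

open Matrix

/-- Squared Euclidean norm of a vector in ℝ^d. -/
noncomputable def vecNormSq {d : ℕ} (v : Fin d → ℝ) : ℝ := ∑ j, v j ^ 2

/-- The continuous linear map `u ↦ ⟨v, u⟩` on ℝ^d (used to state that `v` is a gradient). -/
noncomputable def dotCLM {d : ℕ} (v : Fin d → ℝ) : (Fin d → ℝ) →L[ℝ] ℝ :=
  LinearMap.toContinuousLinearMap
    (∑ j, v j • (LinearMap.proj j : (Fin d → ℝ) →ₗ[ℝ] ℝ))

/-- Squared Frobenius norm. -/
noncomputable def frobSq {m d : ℕ} (X : Matrix (Fin m) (Fin d) ℝ) : ℝ :=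
  ∑ i, ∑ j, X i j ^ 2

/-- Frobenius inner product `⟨X, Y⟩_F = trace(Xᵀ Y)`. -/
noncomputable def frobInner {m d : ℕ} (X Y : Matrix (Fin m) (Fin d) ℝ) : ℝ :=
  ∑ i, ∑ j, X i j * Y i j

/-- All ones vector `1_m`. -/
def onesV (m : ℕ) : Fin m → ℝ := fun _ => 1

/-- The consensus matrix `1_m xᵀ` (all rows equal to `x`). -/
def consMat (m : ℕ) {d : ℕ} (x : Fin d → ℝ) : Matrix (Fin m) (Fin d) ℝ :=
  Matrix.of fun _ j => x j

/-- The matrix `∇f(X)` whose `i`-th row is `∇f_i(x_i)`. -/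
noncomputable def gradMat {m d : ℕ} (gradf : Fin m → (Fin d → ℝ) → (Fin d → ℝ))
    (X : Matrix (Fin m) (Fin d) ℝ) : Matrix (Fin m) (Fin d) ℝ :=
  Matrix.of fun i j => gradf i (X i) j

/-- `v` is a subgradient of the extended-valued convex function `G` at `x`. -/
def IsSubgradAt {d : ℕ} (G : (Fin d → ℝ) → EReal) (v x : Fin d → ℝ) : Prop :=
  ∀ u : Fin d → ℝ, G x + (((∑ j, v j * (u j - x j)) : ℝ) : EReal) ≤ G u

/-- Convexity for an extended-real-valued function. -/
def ERealConvexOn {d : ℕ} (G : (Fin d → ℝ) → EReal) : Prop :=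
  ∀ x y : Fin d → ℝ, ∀ a b : ℝ, 0 ≤ a → 0 ≤ b → a + b = 1 →
    G (a • x + b • y) ≤ (a : EReal) * G x + (b : EReal) * G y

/-- `G` is proper: never `⊥` and finite somewhere. -/
def GProper {d : ℕ} (G : (Fin d → ℝ) → EReal) : Prop :=
  (∀ x, G x ≠ ⊥) ∧ (∃ x, G x ≠ ⊤)

/-- `g(X) = Σ_i G(x_i)`. -/
noncomputable def gSum {m d : ℕ} (G : (Fin d → ℝ) → EReal)
    (X : Matrix (Fin m) (Fin d) ℝ) : EReal :=
  ∑ i, G (X i)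

/-- Objective of the proximal subproblem `Y ↦ g(Y) + (1/(2γ))‖Y − Z‖²_F`. -/
noncomputable def proxObj {m d : ℕ} (G : (Fin d → ℝ) → EReal) (γ : ℝ)
    (Z Y : Matrix (Fin m) (Fin d) ℝ) : EReal :=
  gSum G Y + (((1 / (2 * γ) * frobSq (Y - Z)) : ℝ) : EReal)

/-- `P` is the unique minimizer of the proximal subproblem, i.e. `P = prox_{γ g}(Z)`. -/
def IsProx {m d : ℕ} (G : (Fin d → ℝ) → EReal) (γ : ℝ)
    (Z P : Matrix (Fin m) (Fin d) ℝ) : Prop :=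
  (∀ Y, proxObj G γ Z P ≤ proxObj G γ Z Y) ∧
  (∀ Y, (∀ Y', proxObj G γ Z Y ≤ proxObj G γ Z Y') → Y = P)

/-- Largest eigenvalue of a symmetric matrix, via the Rayleigh quotient. -/
noncomputable def lamMax {m : ℕ} (P : Matrix (Fin m) (Fin m) ℝ) : ℝ :=
  sSup {r : ℝ | ∃ z : Fin m → ℝ, vecNormSq z = 1 ∧ r = z ⬝ᵥ (P *ᵥ z)}

/-- Smallest eigenvalue of a symmetric matrix, via the Rayleigh quotient. -/
noncomputable def lamMin {m : ℕ} (P : Matrix (Fin m) (Fin m) ℝ) : ℝ :=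
  sInf {r : ℝ | ∃ z : Fin m → ℝ, vecNormSq z = 1 ∧ r = z ⬝ᵥ (P *ᵥ z)}

/-- Second-smallest eigenvalue `λ₂(C) = min{⟨z, Cz⟩ : ‖z‖ = 1, 1ᵀz = 0}`. -/
noncomputable def lam2 {m : ℕ} (C : Matrix (Fin m) (Fin m) ℝ) : ℝ :=
  sInf {r : ℝ | ∃ z : Fin m → ℝ, vecNormSq z = 1 ∧ (∑ i, z i) = 0 ∧ r = z ⬝ᵥ (C *ᵥ z)}


/-- The positive semidefinite square root of a positive semidefinite matrix
(as defined in Mathlib of December 2024; removed from later Mathlib). -/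
noncomputable def Matrix.PosSemidef.sqrt {n : Type*} [Fintype n] [DecidableEq n] {𝕜 : Type*}
    [RCLike 𝕜] [PartialOrder 𝕜] {A : Matrix n n 𝕜} (hA : A.PosSemidef) : Matrix n n 𝕜 :=
  hA.1.eigenvectorUnitary.1 * diagonal ((↑) ∘ (Real.sqrt ·) ∘ hA.1.eigenvalues) *
    (star hA.1.eigenvectorUnitary : Matrix n n 𝕜)

lemma sqrt_isHermitian' {m : ℕ} {C : Matrix (Fin m) (Fin m) ℝ} (hC : C.PosSemidef) :
    hC.sqrt.IsHermitian := by
  unfold Matrix.PosSemidef.sqrt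
  unfold Matrix.IsHermitian
  rw [conjTranspose_mul, conjTranspose_mul, diagonal_conjTranspose, Matrix.star_eq_conjTranspose,
    conjTranspose_conjTranspose, star_trivial, Matrix.mul_assoc]

lemma sqrt_mul_self' {m : ℕ} {C : Matrix (Fin m) (Fin m) ℝ} (hC : C.PosSemidef) :
    hC.sqrt * hC.sqrt = C := by
  unfold Matrix.PosSemidef.sqrt
  set U : Matrix (Fin m) (Fin m) ℝ := hC.1.eigenvectorUnitary.1 with hU
  have hUU : (star hC.1.eigenvectorUnitary : Matrix (Fin m) (Fin m) ℝ) * U = 1 := by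
    rw [hU]; simp
  have hE : diagonal (((↑) ∘ (Real.sqrt ·) ∘ hC.1.eigenvalues) : Fin m → ℝ) *
      diagonal ((↑) ∘ (Real.sqrt ·) ∘ hC.1.eigenvalues)
      = diagonal (RCLike.ofReal ∘ hC.1.eigenvalues) := by
    rw [diagonal_mul_diagonal]
    congr 1; funext v
    simp [Real.mul_self_sqrt (hC.eigenvalues_nonneg v)]
  conv_rhs => rw [hC.1.spectral_theorem, Unitary.conjStarAlgAut_apply]
  rw [← hE]
  change U * _ * star U * (U * _ * star U) = U * _ * star U
  simp only [Matrix.mul_assoc]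
  congr 1
  rw [← Matrix.mul_assoc _ U, hUU, Matrix.one_mul]
  rfl

/-! ### Auxiliary lemmas -/

lemma sum_mul_self_nonpos {n : ℕ} {v : Fin n → ℝ} (h : ∑ j, v j * v j ≤ 0) : v = 0 := by
  have h0 : ∑ j, v j * v j = 0 :=
    le_antisymm h (Finset.sum_nonneg fun j _ => mul_self_nonneg _)
  funext j
  exact mul_self_eq_zero.mp
    ((Finset.sum_eq_zero_iff_of_nonneg (fun j _ => mul_self_nonneg (v j))).mp h0 j
    (Finset.mem_univ j))

lemma sqrt_mulVec_zero_iff {m : ℕ} {C : Matrix (Fin m) (Fin m) ℝ} (hC : C.PosSemidef)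
    (z : Fin m → ℝ) : hC.sqrt *ᵥ z = 0 ↔ C *ᵥ z = 0 := by
  have hsymm : hC.sqrt.transpose = hC.sqrt := by
    rw [← conjTranspose_eq_transpose_of_trivial]; exact sqrt_isHermitian' hC
  constructor
  · intro h
    rw [← sqrt_mul_self' hC, ← mulVec_mulVec, h, mulVec_zero]
  · intro h
    have h1 : z ⬝ᵥ (C *ᵥ z) = 0 := by rw [h, dotProduct_zero]
    have h2 : z ⬝ᵥ (C *ᵥ z) = (hC.sqrt *ᵥ z) ⬝ᵥ (hC.sqrt *ᵥ z) := by
      conv_lhs => rw [← sqrt_mul_self' hC]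
      rw [← mulVec_mulVec, dotProduct_mulVec, ← mulVec_transpose, hsymm]
    apply sum_mul_self_nonpos
    simp only [dotProduct] at h2
    rw [← h2]
    simp only [dotProduct] at h1
    rw [h1]

open Module in
lemma exists_mulVec_eq {m : ℕ} (hm : 0 < m) {C : Matrix (Fin m) (Fin m) ℝ}
    (hsymm : Cᵀ = C)
    (hnull : ∀ z : Fin m → ℝ, C *ᵥ z = 0 ↔ ∃ c : ℝ, z = fun _ => c)
    (w : Fin m → ℝ) (hw : ∑ i, w i = 0) : ∃ y, C *ᵥ y = w := by
  classical
  set φ := C.mulVecLin with hφ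
  set ψ : (Fin m → ℝ) →ₗ[ℝ] ℝ :=
    (∑ i, LinearMap.proj i : (Fin m → ℝ) →ₗ[ℝ] ℝ) with hψ
  have hψap : ∀ z : Fin m → ℝ, ψ z = ∑ i, z i := by
    intro z; simp [hψ]
  have hones : ((fun _ => (1:ℝ)) : Fin m → ℝ) ≠ 0 := by
    intro h
    have := congrFun h ⟨0, hm⟩
    simp at this
  have hker : LinearMap.ker φ = Submodule.span ℝ {((fun _ => (1:ℝ)) : Fin m → ℝ)} := by
    ext z
    rw [LinearMap.mem_ker, Submodule.mem_span_singleton]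
    simp only [hφ, mulVecLin_apply, hnull]
    constructor
    · rintro ⟨c, rfl⟩; exact ⟨c, by funext i; simp⟩
    · rintro ⟨a, rfl⟩; exact ⟨a, by funext i; simp⟩
  have hkerrank : finrank ℝ (LinearMap.ker φ) = 1 := by
    rw [hker]; exact finrank_span_singleton hones
  have hrn : finrank ℝ (LinearMap.range φ) + 1 = m := by
    have := LinearMap.finrank_range_add_finrank_ker φ
    rw [hkerrank] at this
    simpa [Module.finrank_pi] using this
  have hψsurj : LinearMap.range ψ = ⊤ := by
    rw [LinearMap.range_eq_top]
    intro r
    refine ⟨fun i => if i = ⟨0, hm⟩ then r else 0, ?_⟩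
    rw [hψap]
    simp
  have hψker : finrank ℝ (LinearMap.ker ψ) + 1 = m := by
    have := LinearMap.finrank_range_add_finrank_ker ψ
    rw [hψsurj] at this
    simp only [finrank_top, finrank_self, Module.finrank_pi, Fintype.card_fin] at this
    omega
  have hle : LinearMap.range φ ≤ LinearMap.ker ψ := by
    rintro _ ⟨y, rfl⟩
    rw [LinearMap.mem_ker, hψap]
    simp only [hφ, mulVecLin_apply, mulVec, dotProduct]
    rw [Finset.sum_comm]
    have hcol : ∀ k, ∑ i, C i k = 0 := by
      intro k
      have h1 : C *ᵥ (fun _ => (1:ℝ)) = 0 := (hnull _).mpr ⟨1, rfl⟩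
      have := congrFun h1 k
      simp only [mulVec, dotProduct, mul_one, Pi.zero_apply] at this
      calc ∑ i, C i k = ∑ i, Cᵀ k i := by simp [Matrix.transpose_apply]
        _ = ∑ i, C k i := by rw [hsymm]
        _ = 0 := this
    refine Finset.sum_eq_zero fun k _ => ?_
    rw [← Finset.sum_mul, hcol, zero_mul]
  have heq : LinearMap.range φ = LinearMap.ker ψ :=
    Submodule.eq_of_le_of_finrank_eq hle (by omega)
  have hwmem : w ∈ LinearMap.ker ψ := by rw [LinearMap.mem_ker, hψap]; exact hw
  rw [← heq] at hwmem
  obtain ⟨y, hy⟩ := hwmem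
  exact ⟨y, hy⟩

lemma dotCLM_apply {d : ℕ} (v u : Fin d → ℝ) : dotCLM v u = ∑ j, v j * u j := by
  simp [dotCLM, LinearMap.sum_apply, smul_eq_mul]

lemma hasFDerivAt_halfSq {d : ℕ} (a x : Fin d → ℝ) :
    HasFDerivAt (fun y : Fin d → ℝ => (1/2) * ∑ j, (y j - a j) ^ 2)
      (dotCLM (x - a)) x := by
  have h1 : ∀ j : Fin d, HasFDerivAt (fun y : Fin d → ℝ => (y j - a j) ^ 2)
      (((x j - a j) • (ContinuousLinearMap.proj j : (Fin d → ℝ) →L[ℝ] ℝ))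
        + ((x j - a j) • (ContinuousLinearMap.proj j : (Fin d → ℝ) →L[ℝ] ℝ))) x := by
    intro j
    have hj : HasFDerivAt (fun y : Fin d → ℝ => y j - a j)
        (ContinuousLinearMap.proj j : (Fin d → ℝ) →L[ℝ] ℝ) x :=
      (hasFDerivAt_apply j x).sub_const (a j)
    have hm := hj.mul hj
    have heq : (fun y : Fin d → ℝ => (y j - a j) ^ 2)
        = fun y => (y j - a j) * (y j - a j) := by funext y; ring
    rw [heq]
    exact hm
  have h2 := (HasFDerivAt.fun_sum (fun j (_ : j ∈ Finset.univ) => h1 j)).const_mul (1/2 : ℝ)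
  refine h2.congr_fderiv ?_
  ext u
  simp [dotCLM_apply, Finset.mul_sum]
  refine Finset.sum_congr rfl fun j _ => ?_
  ring

lemma convexOn_halfSq_sub {d : ℕ} (a : Fin d → ℝ) :
    ConvexOn ℝ Set.univ
      (fun x : Fin d → ℝ => (1/2) * ∑ j, (x j - a j) ^ 2 - 1/2 * vecNormSq x) := by
  have hfe : (fun x : Fin d → ℝ => (1/2) * ∑ j, (x j - a j) ^ 2 - 1/2 * vecNormSq x)
      = fun x => ∑ j, (a j ^ 2 / 2 - a j * x j) := by
    funext x
    rw [vecNormSq, Finset.mul_sum, Finset.mul_sum, ← Finset.sum_sub_distrib]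
    exact Finset.sum_congr rfl fun j _ => by ring
  rw [hfe]
  refine ⟨convex_univ, ?_⟩
  intro x _ y _ p q hp hq hpq
  simp only [Pi.add_apply, Pi.smul_apply, smul_eq_mul]
  rw [Finset.mul_sum, Finset.mul_sum, ← Finset.sum_add_distrib]
  refine le_of_eq (Finset.sum_congr rfl fun j _ => ?_)
  nlinarith [hpq]

lemma isSubgradAt_zero_iff {d : ℕ} (v x : Fin d → ℝ) :
    IsSubgradAt (fun _ => (0 : EReal)) v x ↔ v = 0 := by
  constructor
  · intro h
    have := h (x + v)
    simp only [zero_add] at this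
    have hr : ((∑ j, v j * ((x + v) j - x j) : ℝ) : EReal) ≤ ((0:ℝ) : EReal) := by
      simpa using this
    rw [EReal.coe_le_coe_iff] at hr
    apply sum_mul_self_nonpos
    simpa using hr
  · rintro rfl
    intro u
    simp

lemma isSubgradAt_linear_iff {d : ℕ} (b v x : Fin d → ℝ) :
    IsSubgradAt (fun u => ((∑ j, b j * u j : ℝ) : EReal)) v x ↔ v = b := by
  constructor
  · intro h
    have := h (x + (v - b))
    rw [← EReal.coe_add, EReal.coe_le_coe_iff] at this
    have hkey : ∑ j, (v j - b j) * (v j - b j) ≤ 0 := by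
      simp only [Pi.add_apply, Pi.sub_apply, add_sub_cancel_left] at this
      have h2 : ∑ j, b j * (x j + (v j - b j))
          = ∑ j, b j * x j + ∑ j, b j * (v j - b j) := by
        rw [← Finset.sum_add_distrib]
        exact Finset.sum_congr rfl fun j _ => by ring
      rw [h2] at this
      have h3 : ∑ j, v j * (v j - b j) ≤ ∑ j, b j * (v j - b j) := by linarith
      have h4 : ∑ j, (v j - b j) * (v j - b j)
          = ∑ j, v j * (v j - b j) - ∑ j, b j * (v j - b j) := by
        rw [← Finset.sum_sub_distrib]
        exact Finset.sum_congr rfl fun j _ => by ring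
      linarith
    have hvb := sum_mul_self_nonpos hkey
    funext j
    have := congrFun hvb j
    simp only [Pi.sub_apply, Pi.zero_apply] at this
    linarith
  · rintro rfl
    intro u
    rw [← EReal.coe_add, EReal.coe_le_coe_iff]
    refine le_of_eq ?_
    rw [← Finset.sum_add_distrib]
    exact Finset.sum_congr rfl fun j _ => by ring

lemma gZero_props {d : ℕ} : GProper (fun _ : Fin d → ℝ => (0 : EReal))
    ∧ ERealConvexOn (fun _ : Fin d → ℝ => (0 : EReal))
    ∧ LowerSemicontinuous (fun _ : Fin d → ℝ => (0 : EReal)) := by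
  refine ⟨⟨fun x => by simp, ⟨0, by simp⟩⟩, ?_, lowerSemicontinuous_const⟩
  intro x y a b ha hb hab
  simp

lemma gLin_props {d : ℕ} (b : Fin d → ℝ) :
    GProper (fun u : Fin d → ℝ => ((∑ j, b j * u j : ℝ) : EReal))
    ∧ ERealConvexOn (fun u : Fin d → ℝ => ((∑ j, b j * u j : ℝ) : EReal))
    ∧ LowerSemicontinuous (fun u : Fin d → ℝ => ((∑ j, b j * u j : ℝ) : EReal)) := by
  refine ⟨⟨fun x => by simp, ⟨0, by simp⟩⟩, ?_, ?_⟩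
  · intro x y p q hp hq hpq
    rw [← EReal.coe_mul, ← EReal.coe_mul, ← EReal.coe_add, EReal.coe_le_coe_iff]
    refine le_of_eq ?_
    rw [Finset.mul_sum, Finset.mul_sum, ← Finset.sum_add_distrib]
    refine Finset.sum_congr rfl fun j _ => ?_
    simp only [Pi.add_apply, Pi.smul_apply, smul_eq_mul]
    ring
  · exact continuous_coe_real_ereal.comp
      (continuous_finset_sum _ fun j _ => (continuous_const.mul (continuous_apply j)))
      |>.lowerSemicontinuous

lemma lip_aux {d : ℕ} (a x y : Fin d → ℝ) :
    vecNormSq ((x - a) - (y - a)) ≤ (1:ℝ) ^ 2 * vecNormSq (x - y) := by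
  rw [sub_sub_sub_cancel_right, one_pow, one_mul]

lemma matMul_zero_iff {m d : ℕ} (M : Matrix (Fin m) (Fin m) ℝ)
    (X : Matrix (Fin m) (Fin d) ℝ) :
    M * X = 0 ↔ ∀ j, M *ᵥ (fun i => X i j) = 0 := by
  constructor
  · intro h j
    funext i
    have := congrFun (congrFun h i) j
    simpa [Matrix.mul_apply, mulVec, dotProduct] using this
  · intro h
    ext i j
    have := congrFun (h j) i
    simpa [mulVec, dotProduct, Matrix.mul_apply] using this

lemma vecMul_apply' {m d : ℕ} (u : Fin m → ℝ) (X : Matrix (Fin m) (Fin d) ℝ) (j : Fin d) :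
    (u ᵥ* X) j = ∑ i, u i * X i j := by
  simp [Matrix.vecMul, dotProduct]


/-- `S_KKT = S_Fix` for every problem instance iff Assumption 3 holds. -/
theorem stmt_3 {m d : ℕ} (hm : 0 < m) (hd : 0 < d)
    (C A B : Matrix (Fin m) (Fin m) ℝ) (hC : C.PosSemidef)
    (hnull : ∀ z : Fin m → ℝ, C *ᵥ z = 0 ↔ ∃ c : ℝ, z = fun _ => c)
    (γ : ℝ) (hγ : 0 < γ) :
    (∀ (μ L : ℝ) (f : Fin m → (Fin d → ℝ) → ℝ)
        (gradf : Fin m → (Fin d → ℝ) → (Fin d → ℝ)) (G : (Fin d → ℝ) → EReal),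
      0 < μ → μ ≤ L →
      (∀ i x, HasFDerivAt (f i) (dotCLM (gradf i x)) x) →
      (∀ i, ConvexOn ℝ Set.univ fun x => f i x - μ / 2 * vecNormSq x) →
      (∀ i x y, vecNormSq (gradf i x - gradf i y) ≤ L ^ 2 * vecNormSq (x - y)) →
      GProper G → ERealConvexOn G → LowerSemicontinuous G →
      {X : Matrix (Fin m) (Fin d) ℝ | ∃ Y : Matrix (Fin m) (Fin d) ℝ,
          hC.sqrt * X = 0 ∧
          ∀ i : Fin m, IsSubgradAt G ((-(gradMat gradf X + hC.sqrt * Y)) i) (X i)} =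
      {X : Matrix (Fin m) (Fin d) ℝ | C * X = 0 ∧
          ∃ V : Matrix (Fin m) (Fin d) ℝ,
            (∀ i : Fin m, IsSubgradAt G (V i) (X i)) ∧
            onesV m ᵥ* ((1 - A) * X) + γ • (onesV m ᵥ* (B * gradMat gradf X)) =
              -(γ • (onesV m ᵥ* V))}) ↔
      (onesV m ⬝ᵥ (A *ᵥ onesV m) = (m : ℝ) ∧ onesV m ᵥ* B = onesV m) := by
  classical
  set s := hC.sqrt with hs
  have hCsymm : Cᵀ = C := by
    rw [← conjTranspose_eq_transpose_of_trivial]; exact hC.1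
  have hssymm : sᵀ = s := by
    rw [← conjTranspose_eq_transpose_of_trivial]; exact sqrt_isHermitian' hC
  -- matrix-level kernel equivalence
  have hsmul_zero : ∀ X : Matrix (Fin m) (Fin d) ℝ, s * X = 0 ↔ C * X = 0 := by
    intro X
    rw [matMul_zero_iff, matMul_zero_iff]
    exact forall_congr' fun j => sqrt_mulVec_zero_iff hC _
  -- range of sqrt contains mean-zero vectors
  have hexists : ∀ w : Fin m → ℝ, ∑ i, w i = 0 → ∃ y, s *ᵥ y = w := by
    intro w hw
    obtain ⟨z, hz⟩ := exists_mulVec_eq hm hCsymm hnull w hw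
    exact ⟨s *ᵥ z, by rw [mulVec_mulVec, sqrt_mul_self' hC, hz]⟩
  -- ones is in the kernel of s
  have honess : onesV m ᵥ* s = 0 := by
    have h0 : s *ᵥ onesV m = 0 := (sqrt_mulVec_zero_iff hC _).mpr ((hnull _).mpr ⟨1, rfl⟩)
    rw [← hssymm, vecMul_transpose, h0]
  -- consensus
  have hrows : ∀ X : Matrix (Fin m) (Fin d) ℝ, C * X = 0 → ∀ i, X i = X ⟨0, hm⟩ := by
    intro X hCX i
    funext j
    obtain ⟨c, hc⟩ := (hnull (fun k => X k j)).mp (((matMul_zero_iff C X).mp hCX) j)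
    rw [congrFun hc i, congrFun hc ⟨0, hm⟩]
  -- the first fixed-point term for consensus X
  have hfirst : ∀ X : Matrix (Fin m) (Fin d) ℝ, (∀ i, X i = X ⟨0, hm⟩) →
      ∀ j, (onesV m ᵥ* ((1 - A) * X)) j
        = ((m : ℝ) - onesV m ⬝ᵥ (A *ᵥ onesV m)) * X ⟨0, hm⟩ j := by
    intro X hX j
    rw [← vecMul_vecMul, vecMul_apply']
    have h1 : ∀ i, X i j = X ⟨0, hm⟩ j := fun i => by rw [hX i]
    have h2 : ∀ i : Fin m, (onesV m ᵥ* (1 - A)) i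
        = ∑ k, ((1 : Matrix (Fin m) (Fin m) ℝ) k i - A k i) := by
      intro i
      rw [vecMul_apply']
      simp [onesV, Matrix.sub_apply]
    calc ∑ i, (onesV m ᵥ* (1 - A)) i * X i j
        = (∑ i, ∑ k, ((1 : Matrix (Fin m) (Fin m) ℝ) k i - A k i)) * X ⟨0, hm⟩ j := by
          rw [Finset.sum_mul]
          exact Finset.sum_congr rfl fun i _ => by rw [h1 i, h2 i]
      _ = ((m : ℝ) - onesV m ⬝ᵥ (A *ᵥ onesV m)) * X ⟨0, hm⟩ j := by
          congr 1
          have : ∑ i : Fin m, ∑ k, ((1 : Matrix (Fin m) (Fin m) ℝ) k i - A k i)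
              = ∑ i : Fin m, ((∑ k, (1 : Matrix (Fin m) (Fin m) ℝ) k i) - ∑ k, A k i) := by
            exact Finset.sum_congr rfl fun i _ => by rw [Finset.sum_sub_distrib]
          rw [this, Finset.sum_sub_distrib]
          congr 1
          · simp [Matrix.one_apply]
          · rw [Finset.sum_comm]
            simp [dotProduct, mulVec, onesV]
  constructor
  · intro H
    have step1 : onesV m ⬝ᵥ (A *ᵥ onesV m) = (m : ℝ) := by
      have hEq := H 1 1 (fun _ y => (1/2) * ∑ j, (y j - (1:ℝ)) ^ 2)
        (fun _ y => y - fun _ => (1:ℝ)) (fun _ => (0 : EReal)) one_pos le_rfl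
        (fun i x => hasFDerivAt_halfSq (fun _ => (1:ℝ)) x)
        (fun i => convexOn_halfSq_sub (fun _ => (1:ℝ)))
        (fun i x y => lip_aux (fun _ => (1:ℝ)) x y)
        gZero_props.1 gZero_props.2.1 gZero_props.2.2
      set gradf : Fin m → (Fin d → ℝ) → (Fin d → ℝ) := fun _ y => y - fun _ => (1:ℝ)
        with hgradf
      set X : Matrix (Fin m) (Fin d) ℝ := Matrix.of fun _ _ => (1:ℝ) with hXdef
      have hgm : gradMat gradf X = 0 := by
        ext i j
        simp [gradMat, hgradf, hXdef]
      have hXmem : ∃ Y : Matrix (Fin m) (Fin d) ℝ, s * X = 0 ∧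
          ∀ i : Fin m, IsSubgradAt (fun _ => (0 : EReal))
            ((-(gradMat gradf X + s * Y)) i) (X i) := by
        refine ⟨0, ?_, ?_⟩
        · refine (hsmul_zero X).mpr ((matMul_zero_iff C X).mpr fun j => ?_)
          exact (hnull _).mpr ⟨1, by funext i; simp [hXdef]⟩
        · intro i
          rw [isSubgradAt_zero_iff]
          funext j
          simp [hgm]
      obtain ⟨hCX, V, hVsub, heq⟩ := (Set.ext_iff.mp hEq X).mp hXmem
      have hV : V = 0 := by
        funext i j
        exact congrFun ((isSubgradAt_zero_iff _ _).mp (hVsub i)) j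
      rw [hV, hgm, Matrix.mul_zero, vecMul_zero, smul_zero, neg_zero, add_zero] at heq
      have := congrFun heq ⟨0, hd⟩
      rw [hfirst X (fun i => rfl) ⟨0, hd⟩] at this
      have hx1 : X ⟨0, hm⟩ ⟨0, hd⟩ = 1 := rfl
      rw [hx1, mul_one, Pi.zero_apply] at this
      linarith
    refine ⟨step1, ?_⟩
    set c : Fin m → ℝ := onesV m ᵥ* B with hc
    have step2 : ∀ k l : Fin m, c k = c l := by
      intro k l
      set t : Fin m → ℝ :=
        fun i => (if i = k then (1:ℝ) else 0) - (if i = l then (1:ℝ) else 0) with ht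
      have hts : ∑ i, t i = 0 := by
        simp [ht, Finset.sum_sub_distrib]
      have hEq := H 1 1 (fun i y => (1/2) * ∑ j, (y j - t i) ^ 2)
        (fun i y => y - fun _ => t i) (fun _ => (0 : EReal)) one_pos le_rfl
        (fun i x => hasFDerivAt_halfSq (fun _ => t i) x)
        (fun i => convexOn_halfSq_sub (fun _ => t i))
        (fun i x y => lip_aux (fun _ => t i) x y)
        gZero_props.1 gZero_props.2.1 gZero_props.2.2
      set gradf : Fin m → (Fin d → ℝ) → (Fin d → ℝ) := fun i y => y - fun _ => t i
        with hgradf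
      set X : Matrix (Fin m) (Fin d) ℝ := 0 with hXdef
      have hgm : ∀ i j, gradMat gradf X i j = -(t i) := by
        intro i j
        simp [gradMat, hgradf, hXdef]
      obtain ⟨y, hy⟩ := hexists t hts
      have hXmem : ∃ Y : Matrix (Fin m) (Fin d) ℝ, s * X = 0 ∧
          ∀ i : Fin m, IsSubgradAt (fun _ => (0 : EReal))
            ((-(gradMat gradf X + s * Y)) i) (X i) := by
        refine ⟨Matrix.of fun i _ => y i, by rw [hXdef, Matrix.mul_zero], ?_⟩
        intro i
        rw [isSubgradAt_zero_iff]
        funext j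
        have hsy : (s * Matrix.of fun i _ => y i) i j = (s *ᵥ y) i := by
          simp [Matrix.mul_apply, mulVec, dotProduct]
        simp only [Matrix.neg_apply, Matrix.add_apply, hsy, hy, hgm, Pi.zero_apply]
        ring
      obtain ⟨hCX, V, hVsub, heq⟩ := (Set.ext_iff.mp hEq X).mp hXmem
      have hV : V = 0 := by
        funext i j
        exact congrFun ((isSubgradAt_zero_iff _ _).mp (hVsub i)) j
      rw [hV, vecMul_zero, smul_zero, neg_zero, hXdef, Matrix.mul_zero, vecMul_zero,
        zero_add] at heq
      have heq' : onesV m ᵥ* (B * gradMat gradf 0) = 0 :=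
        (smul_eq_zero.mp heq).resolve_left (ne_of_gt hγ)
      have hj := congrFun heq' ⟨0, hd⟩
      rw [← vecMul_vecMul, ← hc, vecMul_apply'] at hj
      have hgm0 : ∀ i j, gradMat gradf (0 : Matrix (Fin m) (Fin d) ℝ) i j = -(t i) := by
        intro i j
        simp [gradMat, hgradf]
      simp only [hgm0, Pi.zero_apply] at hj
      have : ∑ i, c i * -(t i) = c l - c k := by
        simp only [ht, neg_sub, mul_sub, Finset.sum_sub_distrib, mul_ite, mul_one, mul_zero]
        simp
      rw [this] at hj
      linarith
    have step3 : ∑ i, c i = (m : ℝ) := by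
      have hEq := H 1 1 (fun i y => (1/2) * ∑ j, (y j - (0:ℝ)) ^ 2)
        (fun i y => y - fun _ => (0:ℝ))
        (fun u => ((∑ j, (fun _ => (1:ℝ)) j * u j : ℝ) : EReal)) one_pos le_rfl
        (fun i x => hasFDerivAt_halfSq (fun _ => (0:ℝ)) x)
        (fun i => convexOn_halfSq_sub (fun _ => (0:ℝ)))
        (fun i x y => lip_aux (fun _ => (0:ℝ)) x y)
        (gLin_props _).1 (gLin_props _).2.1 (gLin_props _).2.2
      set gradf : Fin m → (Fin d → ℝ) → (Fin d → ℝ) := fun i y => y - fun _ => (0:ℝ)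
        with hgradf
      set X : Matrix (Fin m) (Fin d) ℝ := Matrix.of fun _ _ => (-1 : ℝ) with hXdef
      have hgm : ∀ i j, gradMat gradf X i j = -1 := by
        intro i j
        simp [gradMat, hgradf, hXdef]
      have hXmem : ∃ Y : Matrix (Fin m) (Fin d) ℝ, s * X = 0 ∧
          ∀ i : Fin m, IsSubgradAt (fun u => ((∑ j, (fun _ => (1:ℝ)) j * u j : ℝ) : EReal))
            ((-(gradMat gradf X + s * Y)) i) (X i) := by
        refine ⟨0, ?_, ?_⟩
        · refine (hsmul_zero X).mpr ((matMul_zero_iff C X).mpr fun j => ?_)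
          exact (hnull _).mpr ⟨-1, by funext i; simp [hXdef]⟩
        · intro i
          rw [isSubgradAt_linear_iff]
          funext j
          simp only [Matrix.mul_zero, add_zero, Matrix.neg_apply, hgm]
          norm_num
      obtain ⟨hCX, V, hVsub, heq⟩ := (Set.ext_iff.mp hEq X).mp hXmem
      have hV : ∀ i j, V i j = 1 := by
        intro i j
        exact congrFun ((isSubgradAt_linear_iff _ _ _).mp (hVsub i)) j
      have hj := congrFun heq ⟨0, hd⟩
      simp only [Pi.add_apply, Pi.smul_apply, Pi.neg_apply, smul_eq_mul] at hj
      rw [hfirst X (fun i => rfl) ⟨0, hd⟩, step1, sub_self, zero_mul, zero_add] at hj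
      rw [← vecMul_vecMul, ← hc, vecMul_apply', vecMul_apply'] at hj
      simp only [hgm, hV, onesV, mul_one, mul_neg_one] at hj
      have hsum : ∑ i : Fin m, -(c i) = -∑ i, c i := by
        rw [Finset.sum_neg_distrib]
      rw [hsum, Finset.sum_const, Finset.card_univ, Fintype.card_fin, nsmul_eq_mul,
        mul_one] at hj
      have : γ * (∑ i, c i) = γ * (m : ℝ) := by linarith
      exact mul_left_cancel₀ (ne_of_gt hγ) this
    funext l
    have hsum : ∑ i, c i = (m : ℝ) * c l := by
      rw [Finset.sum_congr rfl fun i _ => step2 i l, Finset.sum_const, Finset.card_univ,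
        Fintype.card_fin, nsmul_eq_mul]
    have hml : (m : ℝ) * c l = (m : ℝ) * 1 := by
      rw [mul_one, ← hsum, step3]
    have hm0 : (m : ℝ) ≠ 0 := Nat.cast_ne_zero.mpr hm.ne'
    have := mul_left_cancel₀ hm0 hml
    simpa [onesV] using this
  · rintro ⟨hA, hB⟩ μ L f gradf G hμ hμL hderiv hconv hlip hGp hGc hGl
    ext X
    simp only [Set.mem_setOf_eq]
    constructor
    · rintro ⟨Y, hXz, hsub⟩
      have hCX : C * X = 0 := (hsmul_zero X).mp hXz
      refine ⟨hCX, -(gradMat gradf X + s * Y), hsub, ?_⟩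
      have h0 : onesV m ᵥ* ((1 - A) * X) = 0 := by
        funext j
        rw [hfirst X (hrows X hCX) j, hA]
        simp
      rw [h0, zero_add, ← vecMul_vecMul, hB, vecMul_neg, vecMul_add,
        ← vecMul_vecMul, honess, zero_vecMul, add_zero]
      simp
    · rintro ⟨hCX, V, hVsub, heq⟩
      have hXz : s * X = 0 := (hsmul_zero X).mpr hCX
      have h0 : onesV m ᵥ* ((1 - A) * X) = 0 := by
        funext j
        rw [hfirst X (hrows X hCX) j, hA]
        simp
      rw [h0, zero_add, ← vecMul_vecMul, hB] at heq
      have hsum : ∀ j, ∑ i, (-(gradMat gradf X i j) - V i j) = 0 := by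
        intro j
        have hj := congrFun heq j
        simp only [Pi.smul_apply, Pi.neg_apply, smul_eq_mul] at hj
        rw [vecMul_apply', vecMul_apply'] at hj
        have hj'' : γ * (∑ i, onesV m i * gradMat gradf X i j)
            = γ * (-(∑ i, onesV m i * V i j)) := by rw [hj]; ring
        have hj' := mul_left_cancel₀ (ne_of_gt hγ) hj''
        simp only [onesV, one_mul] at hj'
        rw [Finset.sum_sub_distrib, Finset.sum_neg_distrib]
        rw [hj']
        ring
      have hcol : ∀ j, ∃ y, s *ᵥ y = fun i => -(gradMat gradf X i j) - V i j :=
        fun j => hexists _ (hsum j)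
      choose ys hys using hcol
      refine ⟨Matrix.of fun i j => ys j i, hXz, ?_⟩
      intro i
      have hrow : (-(gradMat gradf X + s * Matrix.of fun i j => ys j i)) i = V i := by
        funext j
        have h1 : (s * Matrix.of (fun i j => ys j i)) i j = (s *ᵥ ys j) i := by
          simp [Matrix.mul_apply, mulVec, dotProduct]
        have h2 := congrFun (hys j) i
        simp only [Matrix.neg_apply, Matrix.add_apply]
        rw [h1, h2]
        ring
      rw [hrow]
      exact hVsub i
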